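/- Consider feedforward ReLU networks with architecture (n0, n1, …, nL, n_{L+1}) and parameter space Θ ≅ ⊕_{ℓ=1}^{L+1} (ℝ^{n_ℓ×n_{ℓ−1}} × ℝ^{n_ℓ}) equipped with the Euclidean (Frobenius) inner product. Fix a layer ℓ with 2 ≤ ℓ ≤ L and a subset J ⊆ [n_ℓ], and let O ⊆ Θ be the set of parameters for which the neurons of layer ℓ indexed by J are linear, i.e., W^{(ℓ)}_{jk} ≥ 0 for all j ∈ J and all k ∈ [n_{ℓ−1}], and b^{(ℓ)}_j ≥ 0 for all j ∈ J. Let L : Θ → ℝ be a differentiable loss that is constant on fibers of the realization map, i.e., L(η) = L(θ) whenever f_η = f_θ as functions on ℝ^{n0}. If θ : [0,T] → Θ is a differentiable solution of the gradient flow θ'(t) = −∇L(θ(t)) with θ(t) ∈ O for all t ∈ [0,T], then the matrix-valued quantity (W^{(ℓ+1)}_{:,J})ᵀ W^{(ℓ+1)}_{:,J} − W^{(ℓ)}_J (W^{(ℓ)}_J)ᵀ − b^{(ℓ)}_J (b^{(ℓ)}_J)ᵀ, evaluated along θ(t), is constant on [0,T]. Here W^{(ℓ)}_J denotes the submatrix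 of the rows of W^{(ℓ)} indexed by J, b^{(ℓ)}_J the corresponding subvector, and W^{(ℓ+1)}_{:,J} the submatrix of the columns of W^{(ℓ+1)} indexed by J. -/

import Mathlib

open Matrix

noncomputable section

/-- Entrywise ReLU. -/
def relu {n : ℕ} (x : Fin n → ℝ) : Fin n → ℝ := fun i => max (x i) 0

/-- Index type for the parameter space of a feedforward network with `L` hidden layers and
widths `n 0, n 1, …, n (L+1)` (Lean layer index `ℓ : Fin (L+1)` is paper layer `ℓ+1`):
one summand for weight entries, one for bias entries. -/
abbrev NetParamIx (L : ℕ) (n : ℕ → ℕ) : Type :=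
  (Σ ℓ : Fin (L + 1), Fin (n (ℓ + 1)) × Fin (n ℓ)) ⊕ (Σ ℓ : Fin (L + 1), Fin (n (ℓ + 1)))

/-- The parameter space `Θ ≅ ⊕_{ℓ=1}^{L+1} (ℝ^{n_ℓ×n_{ℓ−1}} × ℝ^{n_ℓ})` with the Euclidean
(Frobenius) inner product. -/
abbrev NetParams (L : ℕ) (n : ℕ → ℕ) : Type := EuclideanSpace ℝ (NetParamIx L n)

/-- Weight matrix of (Lean-indexed) layer `ℓ`, i.e. `W^{(ℓ+1)}` in paper indexing. -/
def wt {L : ℕ} {n : ℕ → ℕ} (θ : NetParams L n) (ℓ : Fin (L + 1)) :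
    Matrix (Fin (n (ℓ + 1))) (Fin (n ℓ)) ℝ :=
  fun i k => θ (Sum.inl ⟨ℓ, (i, k)⟩)

/-- Bias vector of (Lean-indexed) layer `ℓ`, i.e. `b^{(ℓ+1)}` in paper indexing. -/
def bi {L : ℕ} {n : ℕ → ℕ} (θ : NetParams L n) (ℓ : Fin (L + 1)) : Fin (n (ℓ + 1)) → ℝ :=
  fun i => θ (Sum.inr ⟨ℓ, i⟩)

/-- Activation after `ℓ` ReLU layers, `ℓ ≤ L`. -/
def act {L : ℕ} {n : ℕ → ℕ} (θ : NetParams L n) (x : Fin (n 0) → ℝ) :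
    (ℓ : ℕ) → Fin (n ℓ) → ℝ
  | 0 => x
  | ℓ + 1 =>
      if h : ℓ < L + 1 then relu (wt θ ⟨ℓ, h⟩ *ᵥ act θ x ℓ + bi θ ⟨ℓ, h⟩) else 0

/-- The realization map: `f_θ = T^{(L+1)} ∘ φ^{(L)} ∘ ⋯ ∘ φ^{(1)}`, where each `φ` is a ReLU
layer and the final layer is affine. -/
def realizeNet {L : ℕ} {n : ℕ → ℕ} (θ : NetParams L n) (x : Fin (n 0) → ℝ) :
    Fin (n (L + 1)) → ℝ :=
  wt θ ⟨L, Nat.lt_succ_self L⟩ *ᵥ act θ x L + bi θ ⟨L, Nat.lt_succ_self L⟩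


namespace Cons

variable {L : ℕ} {n : ℕ → ℕ}

/-- Row-mixing direction: add row `j'` data of layer `p` into row `j`. -/
def rowV (p : ℕ) (hp : p + 1 ≤ L) (j j' : Fin (n (p+1))) (θ : NetParams L n) :
    NetParams L n := WithLp.toLp 2 (fun (idx : NetParamIx L n) =>
  (∑ k : Fin (n p), if idx = Sum.inl ⟨⟨p, Nat.lt_succ_of_lt hp⟩, (j, k)⟩ then
      θ (Sum.inl ⟨⟨p, Nat.lt_succ_of_lt hp⟩, (j', k)⟩) else 0)
  + (if idx = Sum.inr ⟨⟨p, Nat.lt_succ_of_lt hp⟩, j⟩ then θ (Sum.inr ⟨⟨p, Nat.lt_succ_of_lt hp⟩, j'⟩) else 0))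

/-- Column direction: column `j` of layer `p+1` placed at column `j'`. -/
def colV (p : ℕ) (hp : p + 1 ≤ L) (j j' : Fin (n (p+1))) (θ : NetParams L n) :
    NetParams L n := WithLp.toLp 2 (fun (idx : NetParamIx L n) =>
  ∑ i : Fin (n (p+2)), if idx = Sum.inl ⟨⟨p+1, Nat.lt_succ_of_le hp⟩, (i, j')⟩ then
      θ (Sum.inl ⟨⟨p+1, Nat.lt_succ_of_le hp⟩, (i, j)⟩) else 0)

def cc (p : ℕ) {hp : p + 1 ≤ L} (j j' : Fin (n (p+1))) (ε : ℝ) : ℝ :=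
  ε / (1 + ε * (if j = j' then 1 else 0))

/-- The symmetry: mix row `j' → j` in layer `p` (weights and bias) with factor `ε`,
and compensate in the columns of layer `p+1`. -/
def Φ (p : ℕ) (hp : p + 1 ≤ L) (j j' : Fin (n (p+1))) (ε : ℝ) (θ : NetParams L n) :
    NetParams L n := WithLp.toLp 2 (fun (idx : NetParamIx L n) =>
  θ idx + ε * rowV p hp j j' θ idx - cc p (hp := hp) j j' ε * colV p hp j j' θ idx)

section eval

variable (p : ℕ) (hp : p + 1 ≤ L) (j j' : Fin (n (p+1))) (θ : NetParams L n) (ε : ℝ)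

lemma rowV_wt_p (a : Fin (n (p+1))) (k : Fin (n p)) :
    rowV p hp j j' θ (Sum.inl ⟨⟨p, Nat.lt_succ_of_lt hp⟩, (a, k)⟩)
      = if a = j then θ (Sum.inl ⟨⟨p, Nat.lt_succ_of_lt hp⟩, (j', k)⟩) else 0 := by
  simp only [rowV]
  rw [Finset.sum_eq_single k]
  · simp [Prod.ext_iff, and_comm]
  · intro b _ hb
    simp [Prod.ext_iff, hb, Ne.symm hb]
  · simp

lemma rowV_wt_ne (q : ℕ) (hq : q < L + 1) (hqp : q ≠ p) (a : Fin (n (q+1))) (k : Fin (n q)) :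
    rowV p hp j j' θ (Sum.inl ⟨⟨q, hq⟩, (a, k)⟩) = 0 := by
  simp [rowV, Sigma.ext_iff, Fin.ext_iff, hqp]

lemma rowV_bi_p (a : Fin (n (p+1))) :
    rowV p hp j j' θ (Sum.inr ⟨⟨p, Nat.lt_succ_of_lt hp⟩, a⟩)
      = if a = j then θ (Sum.inr ⟨⟨p, Nat.lt_succ_of_lt hp⟩, j'⟩) else 0 := by
  simp [rowV, Sigma.ext_iff]

lemma rowV_bi_ne (q : ℕ) (hq : q < L + 1) (hqp : q ≠ p) (a : Fin (n (q+1))) :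
    rowV p hp j j' θ (Sum.inr ⟨⟨q, hq⟩, a⟩) = 0 := by
  simp [rowV, Sigma.ext_iff, Fin.ext_iff, hqp]

lemma colV_wt_p1 (i : Fin (n (p+2))) (b : Fin (n (p+1))) :
    colV p hp j j' θ (Sum.inl ⟨⟨p+1, Nat.lt_succ_of_le hp⟩, (i, b)⟩)
      = if b = j' then θ (Sum.inl ⟨⟨p+1, Nat.lt_succ_of_le hp⟩, (i, j)⟩) else 0 := by
  simp only [colV]
  rw [Finset.sum_eq_single i]
  · simp [Prod.ext_iff]
  · intro c _ hc
    simp [Prod.ext_iff, hc, Ne.symm hc]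
  · simp

lemma colV_wt_ne (q : ℕ) (hq : q < L + 1) (hqp : q ≠ p+1) (a : Fin (n (q+1))) (k : Fin (n q)) :
    colV p hp j j' θ (Sum.inl ⟨⟨q, hq⟩, (a, k)⟩) = 0 := by
  simp [colV, Sigma.ext_iff, Fin.ext_iff, hqp]

lemma colV_bi (q : Fin (L+1)) (a : Fin (n (q+1))) :
    colV p hp j j' θ (Sum.inr ⟨q, a⟩) = 0 := by
  simp [colV]

-- wt/bi of Φ
lemma wt_Φ_ne (q : ℕ) (hq : q < L + 1) (hqp : q ≠ p) (hqp1 : q ≠ p + 1) :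
    wt (Φ p hp j j' ε θ) ⟨q, hq⟩ = wt θ ⟨q, hq⟩ := by
  funext a k
  simp [wt, Φ, rowV_wt_ne p hp j j' θ q hq hqp, colV_wt_ne p hp j j' θ q hq hqp1]

lemma bi_Φ_ne (q : ℕ) (hq : q < L + 1) (hqp : q ≠ p) :
    bi (Φ p hp j j' ε θ) ⟨q, hq⟩ = bi θ ⟨q, hq⟩ := by
  funext a
  simp [bi, Φ, rowV_bi_ne p hp j j' θ q hq hqp, colV_bi]

lemma wt_Φ_p (a : Fin (n (p+1))) (k : Fin (n p)) :
    wt (Φ p hp j j' ε θ) ⟨p, Nat.lt_succ_of_lt hp⟩ a k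
      = wt θ ⟨p, Nat.lt_succ_of_lt hp⟩ a k + ε * (if a = j then wt θ ⟨p, Nat.lt_succ_of_lt hp⟩ j' k else 0) := by
  simp [wt, Φ, rowV_wt_p p hp j j' θ a k, colV_wt_ne p hp j j' θ p (by omega) (by omega)]

lemma bi_Φ_p (a : Fin (n (p+1))) :
    bi (Φ p hp j j' ε θ) ⟨p, Nat.lt_succ_of_lt hp⟩ a
      = bi θ ⟨p, Nat.lt_succ_of_lt hp⟩ a + ε * (if a = j then bi θ ⟨p, Nat.lt_succ_of_lt hp⟩ j' else 0) := by
  simp [bi, Φ, rowV_bi_p p hp j j' θ a, colV_bi]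

lemma wt_Φ_p1 (i : Fin (n (p+2))) (b : Fin (n (p+1))) :
    wt (Φ p hp j j' ε θ) ⟨p+1, Nat.lt_succ_of_le hp⟩ i b
      = wt θ ⟨p+1, Nat.lt_succ_of_le hp⟩ i b
        - cc p (hp := hp) j j' ε * (if b = j' then wt θ ⟨p+1, Nat.lt_succ_of_le hp⟩ i j else 0) := by
  simp only [wt, Φ, colV_wt_p1 p hp j j' θ i b,
    rowV_wt_ne p hp j j' θ (p+1) (by omega) (by omega)]
  ring

end eval

end Cons

namespace Cons

variable {L : ℕ} {n : ℕ → ℕ}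

lemma act_nonneg (θ : NetParams L n) (x : Fin (n 0) → ℝ) (m : ℕ) (hm : 1 ≤ m)
    (i : Fin (n m)) : 0 ≤ act θ x m i := by
  obtain ⟨m, rfl⟩ : ∃ m', m = m' + 1 := ⟨m - 1, by omega⟩
  simp only [act]
  split
  · exact le_max_right _ _
  · exact le_rfl

section inv

variable (p : ℕ) (hp : p + 1 ≤ L) (j j' : Fin (n (p+1))) (θ : NetParams L n) (ε : ℝ)
  (x : Fin (n 0) → ℝ)

lemma act_Φ_le (m : ℕ) (hm : m ≤ p) : act (Φ p hp j j' ε θ) x m = act θ x m := by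
  induction m with
  | zero => rfl
  | succ m ih =>
      have hm' : m < L + 1 := by omega
      simp only [act, dif_pos hm']
      rw [wt_Φ_ne p hp j j' θ ε m hm' (by omega) (by omega),
        bi_Φ_ne p hp j j' θ ε m hm' (by omega), ih (by omega)]

variable (hp1 : 1 ≤ p)
  (hj : (∀ k : Fin (n ((⟨p, Nat.lt_succ_of_lt hp⟩ : Fin (L + 1)) : ℕ)), 0 ≤ wt θ ⟨p, Nat.lt_succ_of_lt hp⟩ j k) ∧ 0 ≤ bi θ ⟨p, Nat.lt_succ_of_lt hp⟩ j)
  (hj' : (∀ k : Fin (n ((⟨p, Nat.lt_succ_of_lt hp⟩ : Fin (L + 1)) : ℕ)), 0 ≤ wt θ ⟨p, Nat.lt_succ_of_lt hp⟩ j' k) ∧ 0 ≤ bi θ ⟨p, Nat.lt_succ_of_lt hp⟩ j')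
  (hε : 0 ≤ ε)

include hp1 hj hj' hε in
lemma act_Φ_p1 : act (Φ p hp j j' ε θ) x (p+1)
    = fun i => act θ x (p+1) i + ε * (if i = j then act θ x (p+1) j' else 0) := by
  have hpL : p < L + 1 := by omega
  set z := act θ x p with hz
  have hznn : ∀ k, 0 ≤ z k := fun k => act_nonneg θ x p hp1 k
  set v := wt θ ⟨p, hpL⟩ *ᵥ z + bi θ ⟨p, hpL⟩ with hv
  have hvnn : ∀ a, (∀ k, 0 ≤ wt θ ⟨p, hpL⟩ a k) → 0 ≤ bi θ ⟨p, hpL⟩ a → 0 ≤ v a := by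
    intro a hw hb
    simp only [hv, Pi.add_apply, mulVec, dotProduct]
    have : 0 ≤ ∑ k, wt θ ⟨p, hpL⟩ a k * z k :=
      Finset.sum_nonneg fun k _ => mul_nonneg (hw k) (hznn k)
    linarith
  have hvj : 0 ≤ v j := hvnn j hj.1 hj.2
  have hvj' : 0 ≤ v j' := hvnn j' hj'.1 hj'.2
  have hact : act θ x (p+1) = relu v := by simp only [act, dif_pos hpL]; rfl
  simp only [act, dif_pos hpL, act_Φ_le p hp j j' θ ε x p le_rfl]
  funext i
  have hpre : (wt (Φ p hp j j' ε θ) ⟨p, hpL⟩ *ᵥ z + bi (Φ p hp j j' ε θ) ⟨p, hpL⟩) i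
      = v i + ε * (if i = j then v j' else 0) := by
    simp only [Pi.add_apply, mulVec, dotProduct, wt_Φ_p, bi_Φ_p, hv]
    by_cases hij : i = j
    · simp only [hij, eq_self_iff_true, if_true, add_mul]
      rw [Finset.sum_add_distrib, mul_add, Finset.mul_sum]
      simp only [mul_assoc]
      ring
    · simp [hij]
  simp only [relu, ← hz, hpre, hact]
  by_cases hij : i = j
  · subst hij
    rw [max_eq_left hvj, max_eq_left hvj', max_eq_left (by positivity)]
  · simp only [if_neg hij, mul_zero, add_zero, relu, hv, Pi.add_apply]

include hp1 hj hj' hε in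
lemma preact_Φ_p1 (hq : p + 1 < L + 1) :
    wt (Φ p hp j j' ε θ) ⟨p+1, hq⟩ *ᵥ act (Φ p hp j j' ε θ) x (p+1)
        + bi (Φ p hp j j' ε θ) ⟨p+1, hq⟩
      = wt θ ⟨p+1, hq⟩ *ᵥ act θ x (p+1) + bi θ ⟨p+1, hq⟩ := by
  set a := act θ x (p+1) with ha
  rw [act_Φ_p1 p hp j j' θ ε x hp1 hj hj' hε,
    bi_Φ_ne p hp j j' θ ε (p+1) hq (by omega)]
  funext i
  simp only [Pi.add_apply, mulVec, dotProduct, wt_Φ_p1]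
  congr 1
  set c := cc p (hp := hp) j j' ε with hc
  set W := wt θ ⟨p+1, hq⟩ with hW
  calc ∑ b, (W i b - c * (if b = j' then W i j else 0))
          * (a b + ε * (if b = j then a j' else 0))
      = ∑ b, (W i b * a b
          + ((if b = j then ε * (W i b * a j') else 0)
            - (if b = j' then c * (W i j * a b) else 0)
            - (if b = j' then (if b = j then c * ε * (W i j * a j') else 0) else 0))) := by
        refine Finset.sum_congr rfl fun b _ => ?_
        by_cases hbj : b = j <;> by_cases hbj' : b = j'
        · subst hbj; subst hbj'; simp; ring
        · subst hbj; simp [hbj']; ring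
        · subst hbj'; simp [hbj]; ring
        · simp [hbj, hbj']
    _ = (∑ b, W i b * a b) + (ε * (W i j * a j') - c * (W i j * a j')
          - (if j' = j then c * ε * (W i j * a j') else 0)) := by
        rw [Finset.sum_add_distrib]
        congr 1
        rw [Finset.sum_sub_distrib, Finset.sum_sub_distrib,
          Finset.sum_ite_eq' Finset.univ j (fun b => ε * (W i b * a j')),
          Finset.sum_ite_eq' Finset.univ j' (fun b => c * (W i j * a b)),
          Finset.sum_ite_eq' Finset.univ j'
            (fun b => if b = j then c * ε * (W i j * a j') else 0)]
        simp
    _ = ∑ b, W i b * a b := by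
        by_cases hjj : j = j'
        · subst hjj
          simp only [if_pos rfl, hc, cc, if_pos rfl, ↓reduceIte, mul_one]
          have h1 : (1 : ℝ) + ε ≠ 0 := by positivity
          field_simp
          ring
        · simp only [hc, cc, if_neg hjj, if_neg (Ne.symm hjj), mul_zero, add_zero, div_one]
          ring

include hp1 hj hj' hε in
lemma act_Φ_ge (m : ℕ) (hm : p + 2 ≤ m) : act (Φ p hp j j' ε θ) x m = act θ x m := by
  induction m with
  | zero => omega
  | succ m ih =>
      rcases Nat.lt_or_ge m (L+1) with hmL | hmL
      · simp only [act, dif_pos hmL]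
        rcases Nat.eq_or_lt_of_le hm with hm' | hm'
        · have hmp1 : m = p + 1 := by omega
          subst hmp1
          rw [preact_Φ_p1 p hp j j' θ ε x hp1 hj hj' hε hmL]
        · rw [wt_Φ_ne p hp j j' θ ε m hmL (by omega) (by omega),
            bi_Φ_ne p hp j j' θ ε m hmL (by omega), ih (by omega)]
      · simp only [act, dif_neg (by omega : ¬ m < L + 1)]

include hp1 hj hj' hε in
lemma realize_Φ : ∀ y, realizeNet (Φ p hp j j' ε θ) y = realizeNet θ y := by
  intro y
  rcases Nat.eq_or_lt_of_le hp with hL | hL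
  · -- p + 1 = L
    subst hL
    simp only [realizeNet]
    exact preact_Φ_p1 p hp j j' θ ε y hp1 hj hj' hε (Nat.lt_succ_self _)
  · -- p + 2 ≤ L
    simp only [realizeNet]
    rw [wt_Φ_ne p hp j j' θ ε L (Nat.lt_succ_self L) (by omega) (by omega),
      bi_Φ_ne p hp j j' θ ε L (Nat.lt_succ_self L) (by omega),
      act_Φ_ge p hp j j' θ ε y hp1 hj hj' hε L (by omega)]

end inv

end Cons

namespace Cons

variable {L : ℕ} {n : ℕ → ℕ}

lemma euclid_sum_apply {κ : Type*} (s : Finset κ)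
    (f : κ → NetParams L n) (i : NetParamIx L n) :
    (∑ a ∈ s, f a) i = ∑ a ∈ s, f a i :=
  map_sum (EuclideanSpace.proj (𝕜 := ℝ) i) f s

lemma hasDerivAt_cc (p : ℕ) (hp : p + 1 ≤ L) (j j' : Fin (n (p+1))) :
    HasDerivAt (cc (L := L) p (hp := hp) j j') 1 0 := by
  have h1 : HasDerivAt (fun ε : ℝ => ε) 1 0 := hasDerivAt_id 0
  have h2 : HasDerivAt (fun ε : ℝ => 1 + ε * (if j = j' then (1:ℝ) else 0))
      (if j = j' then (1:ℝ) else 0) 0 := by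
    exact ((hasDerivAt_const (0:ℝ) (1:ℝ)).add
      (hasDerivAt_mul_const (if j = j' then (1:ℝ) else 0))).congr_deriv (by simp)
  have h3 := h1.div h2 (by norm_num)
  exact h3.congr_deriv (by norm_num)

lemma Φ_zero (p : ℕ) (hp : p + 1 ≤ L) (j j' : Fin (n (p+1))) (θ : NetParams L n) :
    Φ p hp j j' 0 θ = θ := by
  ext idx
  simp [Φ, cc]

lemma hasDerivAt_Φ (p : ℕ) (hp : p + 1 ≤ L) (j j' : Fin (n (p+1))) (θ : NetParams L n) :
    HasDerivAt (fun ε => Φ p hp j j' ε θ)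
      (rowV p hp j j' θ - colV p hp j j' θ) 0 := by
  have hform : (fun ε => Φ p hp j j' ε θ)
      = fun ε : ℝ => θ + ε • rowV p hp j j' θ - cc p (hp := hp) j j' ε • colV p hp j j' θ := by
    funext ε
    ext idx
    simp only [Φ, PiLp.sub_apply, PiLp.add_apply, PiLp.smul_apply, smul_eq_mul]
  rw [hform]
  have h1 : HasDerivAt (fun ε : ℝ => θ + ε • rowV p hp j j' θ) (rowV p hp j j' θ) 0 := by
    exact ((hasDerivAt_const (0:ℝ) θ).add ((hasDerivAt_id (0:ℝ)).smul_const
      (rowV p hp j j' θ))).congr_deriv (by simp)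
  have h2 : HasDerivAt (fun ε : ℝ => cc p (hp := hp) j j' ε • colV p hp j j' θ)
      (colV p hp j j' θ) 0 := by
    simpa using (hasDerivAt_cc p hp j j').smul_const (colV p hp j j' θ)
  exact h1.sub h2

variable (p : ℕ) (hp : p + 1 ≤ L) (hp1 : 1 ≤ p)
  (Lo : NetParams L n → ℝ)
  (hdiff : Differentiable ℝ Lo)
  (hfib : ∀ θ η : NetParams L n,
      (∀ x, realizeNet θ x = realizeNet η x) → Lo θ = Lo η)

include hp1 hdiff hfib in
lemma ortho (j j' : Fin (n (p+1))) (θ₀ : NetParams L n)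
    (hj : (∀ k : Fin (n ((⟨p, Nat.lt_succ_of_lt hp⟩ : Fin (L + 1)) : ℕ)), 0 ≤ wt θ₀ ⟨p, Nat.lt_succ_of_lt hp⟩ j k) ∧ 0 ≤ bi θ₀ ⟨p, Nat.lt_succ_of_lt hp⟩ j)
    (hj' : (∀ k : Fin (n ((⟨p, Nat.lt_succ_of_lt hp⟩ : Fin (L + 1)) : ℕ)), 0 ≤ wt θ₀ ⟨p, Nat.lt_succ_of_lt hp⟩ j' k) ∧ 0 ≤ bi θ₀ ⟨p, Nat.lt_succ_of_lt hp⟩ j') :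
    (∑ k : Fin (n p), θ₀ (Sum.inl ⟨⟨p, Nat.lt_succ_of_lt hp⟩, (j', k)⟩)
        * gradient Lo θ₀ (Sum.inl ⟨⟨p, Nat.lt_succ_of_lt hp⟩, (j, k)⟩))
      + θ₀ (Sum.inr ⟨⟨p, Nat.lt_succ_of_lt hp⟩, j'⟩) * gradient Lo θ₀ (Sum.inr ⟨⟨p, Nat.lt_succ_of_lt hp⟩, j⟩)
      - ∑ i : Fin (n (p+2)), θ₀ (Sum.inl ⟨⟨p+1, Nat.lt_succ_of_le hp⟩, (i, j)⟩)
        * gradient Lo θ₀ (Sum.inl ⟨⟨p+1, Nat.lt_succ_of_le hp⟩, (i, j')⟩) = 0 := by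
  set V := rowV p hp j j' θ₀ - colV p hp j j' θ₀ with hV
  -- the loss is constant along the curve ε ↦ Φ ε θ₀ for ε ≥ 0
  have hconst : ∀ ε ∈ Set.Ici (0:ℝ), Lo (Φ p hp j j' ε θ₀) = Lo θ₀ := fun ε hε =>
    hfib _ _ (realize_Φ p hp j j' θ₀ ε hp1 hj hj' hε)
  -- the derivative of ε ↦ Lo (Φ ε θ₀) at 0 is the pairing of the differential with V
  have hd : HasDerivAt (fun ε => Lo (Φ p hp j j' ε θ₀)) (fderiv ℝ Lo θ₀ V) 0 := by
    have hd0 := (hdiff (Φ p hp j j' 0 θ₀)).hasFDerivAt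
    have hd' := hd0.comp_hasDerivAt 0 (hasDerivAt_Φ p hp j j' θ₀)
    rw [Φ_zero] at hd'
    exact hd'
  have hzero : fderiv ℝ Lo θ₀ V = 0 := by
    have h1 : HasDerivWithinAt (fun ε => Lo (Φ p hp j j' ε θ₀)) 0 (Set.Ici 0) 0 := by
      refine (hasDerivWithinAt_const 0 (Set.Ici 0) (Lo θ₀)).congr ?_ ?_
      · exact fun ε hε => hconst ε hε
      · exact hconst 0 Set.self_mem_Ici
    exact (uniqueDiffOn_Ici (0:ℝ) 0 Set.self_mem_Ici).eq_deriv _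
      hd.hasDerivWithinAt h1
  -- express the pairing as an inner product with the gradient
  have hinner : (inner ℝ (gradient Lo θ₀) V : ℝ) = 0 := by
    rw [gradient, InnerProductSpace.toDual_symm_apply, hzero]
  -- decompose V into basis vectors
  have hVdecomp : V = (∑ k : Fin (n p),
        EuclideanSpace.single (Sum.inl ⟨⟨p, Nat.lt_succ_of_lt hp⟩, (j, k)⟩ : NetParamIx L n)
          (θ₀ (Sum.inl ⟨⟨p, Nat.lt_succ_of_lt hp⟩, (j', k)⟩)))
      + EuclideanSpace.single (Sum.inr ⟨⟨p, Nat.lt_succ_of_lt hp⟩, j⟩ : NetParamIx L n)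
          (θ₀ (Sum.inr ⟨⟨p, Nat.lt_succ_of_lt hp⟩, j'⟩))
      - ∑ i : Fin (n (p+2)),
        EuclideanSpace.single (Sum.inl ⟨⟨p+1, Nat.lt_succ_of_le hp⟩, (i, j')⟩ : NetParamIx L n)
          (θ₀ (Sum.inl ⟨⟨p+1, Nat.lt_succ_of_le hp⟩, (i, j)⟩)) := by
    ext idx
    simp only [hV, PiLp.sub_apply, PiLp.add_apply, Pi.sub_apply, Pi.add_apply,
      euclid_sum_apply, rowV, colV, EuclideanSpace.single_apply]
  rw [hVdecomp] at hinner
  simp only [inner_add_right, inner_sub_right, inner_sum,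
    EuclideanSpace.inner_single_right, RCLike.inner_apply, starRingEnd_apply, star_trivial,
    RingHom.id_apply] at hinner
  exact hinner

end Cons

open Cons

/-- locally conserved quantity under gradient flow. Fix a layer (paper index
`ℓ = p+1` with `2 ≤ ℓ ≤ L`, i.e. `1 ≤ p` and `p + 1 ≤ L`) and a subset `J` of its neurons.
Along any gradient-flow trajectory of a differentiable loss that is constant on fibers of the
realization map and that stays, on `[0,T]`, in the orthant `O` where the neurons in `J` are
linear (nonnegative incoming weights and biases), the quantity
`(W^{(ℓ+1)}_{:,J})ᵀ W^{(ℓ+1)}_{:,J} − W^{(ℓ)}_J (W^{(ℓ)}_J)ᵀ − b^{(ℓ)}_J (b^{(ℓ)}_J)ᵀ`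
is constant on `[0,T]`. -/
theorem locally_conserved_quantity (L : ℕ) (n : ℕ → ℕ)
    (p : ℕ) (hp1 : 1 ≤ p) (hp2 : p + 1 ≤ L)
    (J : Set (Fin (n (p + 1))))
    (T : ℝ)
    (Lo : NetParams L n → ℝ)
    (hdiff : Differentiable ℝ Lo)
    (hfib : ∀ θ η : NetParams L n,
      (∀ x, realizeNet θ x = realizeNet η x) → Lo θ = Lo η)
    (θ : ℝ → NetParams L n)
    (hflow : ∀ t ∈ Set.Icc (0 : ℝ) T, HasDerivAt θ (-(gradient Lo (θ t))) t)
    (hlin : ∀ t ∈ Set.Icc (0 : ℝ) T, ∀ j ∈ J,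
      (∀ k : Fin (n ((⟨p, by omega⟩ : Fin (L + 1)) : ℕ)), 0 ≤ wt (θ t) ⟨p, by omega⟩ j k) ∧ 0 ≤ bi (θ t) ⟨p, by omega⟩ j) :
    ∀ s ∈ Set.Icc (0 : ℝ) T, ∀ t ∈ Set.Icc (0 : ℝ) T, ∀ j ∈ J, ∀ j' ∈ J,
      ((∑ i, wt (θ s) ⟨p + 1, by omega⟩ i j * wt (θ s) ⟨p + 1, by omega⟩ i j')
        - (∑ k, wt (θ s) ⟨p, by omega⟩ j k * wt (θ s) ⟨p, by omega⟩ j' k)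
        - bi (θ s) ⟨p, by omega⟩ j * bi (θ s) ⟨p, by omega⟩ j')
      = ((∑ i, wt (θ t) ⟨p + 1, by omega⟩ i j * wt (θ t) ⟨p + 1, by omega⟩ i j')
        - (∑ k, wt (θ t) ⟨p, by omega⟩ j k * wt (θ t) ⟨p, by omega⟩ j' k)
        - bi (θ t) ⟨p, by omega⟩ j * bi (θ t) ⟨p, by omega⟩ j') := by
  intro s hs t ht j hjJ j' hj'J
  have hpL : p < L + 1 := by omega
  have hp1L : p + 1 < L + 1 := by omega
  -- index abbreviations
  set w1 : Fin (n (p+2)) → Fin (n (p+1)) → NetParamIx L n :=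
    fun i b => Sum.inl ⟨⟨p+1, hp1L⟩, (i, b)⟩ with hw1
  set w0 : Fin (n (p+1)) → Fin (n p) → NetParamIx L n :=
    fun a k => Sum.inl ⟨⟨p, hpL⟩, (a, k)⟩ with hw0
  set b0 : Fin (n (p+1)) → NetParamIx L n := fun a => Sum.inr ⟨⟨p, hpL⟩, a⟩ with hb0
  set g : ℝ → ℝ := fun r =>
    (∑ i : Fin (n (p+2)), θ r (w1 i j) * θ r (w1 i j'))
      - (∑ k : Fin (n p), θ r (w0 j k) * θ r (w0 j' k))
      - θ r (b0 j) * θ r (b0 j') with hg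
  -- component derivatives
  have hc : ∀ (idx : NetParamIx L n), ∀ u ∈ Set.Icc (0:ℝ) T,
      HasDerivAt (fun r => θ r idx) (-(gradient Lo (θ u) idx)) u := by
    intro idx u hu
    have h := (EuclideanSpace.proj (𝕜 := ℝ) idx).hasFDerivAt.comp_hasDerivAt u (hflow u hu)
    exact h
  -- derivative of the conserved quantity is zero
  have hD : ∀ u ∈ Set.Icc (0:ℝ) T, HasDerivAt g 0 u := by
    intro u hu
    have hmul : ∀ a b : NetParamIx L n, HasDerivAt (fun r => θ r a * θ r b)
        (-(θ u b * gradient Lo (θ u) a + θ u a * gradient Lo (θ u) b)) u := by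
      intro a b
      have h := (hc a u hu).mul (hc b u hu)
      exact h.congr_deriv (by ring)
    have h1 := HasDerivAt.sum (fun i (_ : i ∈ Finset.univ) => hmul (w1 i j) (w1 i j'))
    have h2 := HasDerivAt.sum (fun k (_ : k ∈ Finset.univ) => hmul (w0 j k) (w0 j' k))
    have h3 := hmul (b0 j) (b0 j')
    have hgd := (h1.sub h2).sub h3
    refine (hgd.congr_deriv ?_).congr_of_eventuallyEq
      (Filter.Eventually.of_forall fun r => by simp [hg, Finset.sum_apply])
    have O1 := ortho p hp2 hp1 Lo hdiff hfib j j' (θ u) (hlin u hu j hjJ) (hlin u hu j' hj'J)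
    have O2 := ortho p hp2 hp1 Lo hdiff hfib j' j (θ u) (hlin u hu j' hj'J) (hlin u hu j hjJ)
    simp only [hw1, hw0, hb0] at *
    simp only [neg_add, Finset.sum_add_distrib, Finset.sum_neg_distrib]
    linarith [O1, O2]
  -- conclude by constancy on the interval
  rcases le_or_gt T 0 with hT | hT
  · have hs0 : s = 0 := le_antisymm (hs.2.trans hT) hs.1
    have ht0 : t = 0 := le_antisymm (ht.2.trans hT) ht.1
    rw [hs0, ht0]
  · have hdOn : DifferentiableOn ℝ g (Set.Icc 0 T) :=
      fun x hx => (hD x hx).differentiableAt.differentiableWithinAt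
    have hder : ∀ x ∈ Set.Ico (0:ℝ) T, derivWithin g (Set.Icc 0 T) x = 0 := by
      intro x hx
      exact ((hD x (Set.Ico_subset_Icc_self hx)).hasDerivWithinAt).derivWithin
        ((uniqueDiffOn_Icc hT) x (Set.Ico_subset_Icc_self hx))
    have hconst := constant_of_derivWithin_zero hdOn hder
    have h1 : g s = g 0 := hconst s hs
    have h2 : g t = g 0 := hconst t ht
    show g s = g t
    rw [h1, h2]
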